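/- Let n ≥ 1 and let ν be a probability vector on {0,1}^n satisfying ν(ρ) = ν(−ρ) for all ρ and ν(00…0) + ν(11…1) ≥ 1/2. Then ν is a divide and color model with parameter 1/2: there exists a probability vector q on B_n (nonnegative entries summing to 1) with A_{n,1/2} q = ν. -/
import Mathlib


open Finset
open scoped Classical

/-- The divide-and-color matrix `A_{n,p}`: entry at configuration `ρ` and partition `σ` is
`p^{c(σ,ρ)}(1-p)^{‖σ‖-c(σ,ρ)}` if `ρ` is constant on every block of `σ`, and `0` otherwise. -/
noncomputable def colorMatrix (n : ℕ) (p : ℝ) :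
    Matrix (Fin n → Bool) (Finpartition (univ : Finset (Fin n))) ℝ :=
  fun ρ σ =>
    if ∀ B ∈ σ.parts, ∀ i ∈ B, ∀ j ∈ B, ρ i = ρ j then
      p ^ (σ.parts.filter (fun B => ∀ i ∈ B, ρ i = true)).card *
        (1 - p) ^ (σ.parts.card - (σ.parts.filter (fun B => ∀ i ∈ B, ρ i = true)).card)
    else 0

/-- The induced linear map `A_{n,p} : ℝ^{B_n} → ℝ^{{0,1}^n}`. -/
noncomputable def colorMap (n : ℕ) (p : ℝ) :
    ((Finpartition (univ : Finset (Fin n))) → ℝ) →ₗ[ℝ] ((Fin n → Bool) → ℝ) :=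
  (colorMatrix n p).mulVecLin

/-- The partition of `Fin n` into the level sets of `ρ' : Fin n → Bool`. -/
noncomputable def fpart (n : ℕ) (ρ' : Fin n → Bool) : Finpartition (univ : Finset (Fin n)) :=
  Finpartition.ofErase
    {univ.filter (fun i => ρ' i = true), univ.filter (fun i => ρ' i = false)}
    (Finset.supIndep_iff_pairwiseDisjoint.mpr (by
      have hdisj : Disjoint (univ.filter fun i => ρ' i = true)
          (univ.filter fun i => ρ' i = false) := by
        rw [Finset.disjoint_left]
        intro i hi hj
        simp only [Finset.mem_filter] at hi hj
        simp [hi.2] at hj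
      intro x hx y hy hxy
      simp only [coe_insert, Set.mem_insert_iff, coe_singleton, Set.mem_singleton_iff] at hx hy
      rcases hx with rfl | rfl <;> rcases hy with rfl | rfl
      · exact absurd rfl hxy
      · exact hdisj
      · exact hdisj.symm
      · exact absurd rfl hxy))
    (by
      ext i
      simp only [Finset.sup_insert, Finset.sup_singleton, id_eq, Finset.mem_union,
        Finset.mem_filter, Finset.mem_univ, true_and]
      cases h : ρ' i <;> simp)

lemma parts_fpart (n : ℕ) (ρ' : Fin n → Bool) :
    (fpart n ρ').parts =
      ({univ.filter (fun i => ρ' i = true), univ.filter (fun i => ρ' i = false)} :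
        Finset (Finset (Fin n))).erase ∅ := rfl

lemma mem_fpart {n : ℕ} {ρ' : Fin n → Bool} {B : Finset (Fin n)} :
    B ∈ (fpart n ρ').parts ↔ B ≠ ∅ ∧
      (B = univ.filter (fun i => ρ' i = true) ∨ B = univ.filter (fun i => ρ' i = false)) := by
  rw [parts_fpart]
  simp [Finset.mem_erase]

lemma card_fpart_const {n : ℕ} (hn : 1 ≤ n) {ρ' : Fin n → Bool}
    (h : ∀ i j, ρ' i = ρ' j) : (fpart n ρ').parts.card = 1 := by
  have : Nonempty (Fin n) := ⟨⟨0, hn⟩⟩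
  obtain i0 := Classical.arbitrary (Fin n)
  rw [parts_fpart]
  have hne : (univ : Finset (Fin n)) ≠ ∅ := Finset.univ_nonempty.ne_empty
  cases hb : ρ' i0
  · have hT : univ.filter (fun i => ρ' i = true) = ∅ := by
      ext i; simp only [Finset.mem_filter, Finset.mem_univ, true_and, Finset.notMem_empty,
        iff_false]
      rw [h i i0, hb]; simp
    have hF : univ.filter (fun i => ρ' i = false) = univ := by
      ext i; simp only [Finset.mem_filter, Finset.mem_univ, true_and, iff_true]
      rw [h i i0, hb]
    rw [hT, hF]
    rw [show ({∅, univ} : Finset (Finset (Fin n))).erase ∅ = {univ} by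
      ext B; simp [Finset.mem_erase, Finset.mem_insert, and_or_left]
      rintro rfl; exact hne]
    simp
  · have hT : univ.filter (fun i => ρ' i = true) = univ := by
      ext i; simp only [Finset.mem_filter, Finset.mem_univ, true_and, iff_true]
      rw [h i i0, hb]
    have hF : univ.filter (fun i => ρ' i = false) = ∅ := by
      ext i; simp only [Finset.mem_filter, Finset.mem_univ, true_and, Finset.notMem_empty,
        iff_false]
      rw [h i i0, hb]; simp
    rw [hT, hF]
    rw [show ({univ, ∅} : Finset (Finset (Fin n))).erase ∅ = {univ} by
      ext B; simp [Finset.mem_erase, Finset.mem_insert, and_or_left]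
      rintro rfl; exact hne]
    simp

lemma card_fpart_nonconst {n : ℕ} {ρ' : Fin n → Bool}
    (h : ¬ ∀ i j, ρ' i = ρ' j) : (fpart n ρ').parts.card = 2 := by
  push_neg at h
  obtain ⟨a, b, hab⟩ := h
  have hta : ∃ i, ρ' i = true := by
    cases ha : ρ' a
    · cases hb : ρ' b
      · exact absurd (by rw [ha, hb]) hab
      · exact ⟨b, hb⟩
    · exact ⟨a, ha⟩
  have hfa : ∃ i, ρ' i = false := by
    cases ha : ρ' a
    · exact ⟨a, ha⟩
    · cases hb : ρ' b
      · exact ⟨b, hb⟩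
      · exact absurd (by rw [ha, hb]) hab
  obtain ⟨it, hit⟩ := hta
  obtain ⟨jf, hjf⟩ := hfa
  have hTne : univ.filter (fun i => ρ' i = true) ≠ ∅ := by
    apply Finset.ne_empty_of_mem (a := it); simp [hit]
  have hFne : univ.filter (fun i => ρ' i = false) ≠ ∅ := by
    apply Finset.ne_empty_of_mem (a := jf); simp [hjf]
  have hTF : univ.filter (fun i => ρ' i = true) ≠ univ.filter (fun i => ρ' i = false) := by
    intro hEq
    have : it ∈ univ.filter (fun i => ρ' i = false) := hEq ▸ (by simp [hit])
    simp [hit] at this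
  rw [parts_fpart, Finset.erase_eq_of_notMem (by simp [Ne.symm hTne, Ne.symm hFne]),
    Finset.card_pair hTF]


lemma colorMatrix_half {n : ℕ} (ρ : Fin n → Bool) (σ : Finpartition (univ : Finset (Fin n))) :
    colorMatrix n (1/2) ρ σ =
      if ∀ B ∈ σ.parts, ∀ i ∈ B, ∀ j ∈ B, ρ i = ρ j then (1/2 : ℝ) ^ σ.parts.card else 0 := by
  unfold colorMatrix
  split
  · rw [show (1 : ℝ) - 1/2 = 1/2 by norm_num, ← pow_add,
      Nat.add_sub_cancel' (Finset.card_filter_le _ _)]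
  · rfl

lemma cond_fpart {n : ℕ} (ρ ρ' : Fin n → Bool) :
    (∀ B ∈ (fpart n ρ').parts, ∀ i ∈ B, ∀ j ∈ B, ρ i = ρ j) ↔
      ∀ i j, ρ' i = ρ' j → ρ i = ρ j := by
  constructor
  · intro h i j hij
    cases hb : ρ' i
    · refine h (univ.filter (fun k => ρ' k = false)) ?_ i (by simp [hb]) j
        (by simp [← hij, hb])
      exact mem_fpart.mpr ⟨Finset.ne_empty_of_mem (a := i) (by simp [hb]), Or.inr rfl⟩
    · refine h (univ.filter (fun k => ρ' k = true)) ?_ i (by simp [hb]) j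
        (by simp [← hij, hb])
      exact mem_fpart.mpr ⟨Finset.ne_empty_of_mem (a := i) (by simp [hb]), Or.inl rfl⟩
  · intro h B hB i hi j hj
    obtain ⟨-, hB | hB⟩ := mem_fpart.mp hB <;> subst hB <;>
      simp only [Finset.mem_filter] at hi hj <;> exact h i j (hi.2.trans hj.2.symm)

lemma exists_tf {n : ℕ} {ρ' : Fin n → Bool} (h : ¬ ∀ i j, ρ' i = ρ' j) :
    (∃ i, ρ' i = true) ∧ (∃ j, ρ' j = false) := by
  push_neg at h
  obtain ⟨a, b, hab⟩ := h
  cases ha : ρ' a <;> cases hb : ρ' b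
  · exact absurd (by rw [ha, hb]) hab
  · exact ⟨⟨b, hb⟩, ⟨a, ha⟩⟩
  · exact ⟨⟨a, ha⟩, ⟨b, hb⟩⟩
  · exact absurd (by rw [ha, hb]) hab

/-- a `{0,1}`-symmetric probability vector `ν` with
`ν(00…0) + ν(11…1) ≥ 1/2` is a divide and color model with parameter `1/2`. -/
theorem dc_model_half (n : ℕ) (hn : 1 ≤ n) (ν : (Fin n → Bool) → ℝ)
    (hnonneg : ∀ ρ, 0 ≤ ν ρ) (hsum : ∑ ρ, ν ρ = 1)
    (hsym : ∀ ρ : Fin n → Bool, ν ρ = ν (fun i => !(ρ i)))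
    (hconst : (1:ℝ)/2 ≤ ν (fun _ => false) + ν (fun _ => true)) :
    ∃ q : Finpartition (univ : Finset (Fin n)) → ℝ,
      (∀ σ, 0 ≤ q σ) ∧ (∑ σ, q σ = 1) ∧ colorMap n (1/2) q = ν := by
  classical
  have i0 : Fin n := ⟨0, hn⟩
  have hνsym : ν (fun _ => true) = ν (fun _ => false) := (hsym fun _ => false).symm
  set w : (Fin n → Bool) → ℝ := fun ρ' =>
    if ∀ i j, ρ' i = ρ' j then 2 * ν (fun _ => false) - 1/2 else 2 * ν ρ' with hw
  have hwconst : ∀ ρ' : Fin n → Bool, (∀ i j, ρ' i = ρ' j) →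
      w ρ' = 2 * ν (fun _ => false) - 1/2 := by
    intro ρ' h; simp only [hw]; exact if_pos h
  have hwnc : ∀ ρ' : Fin n → Bool, ¬(∀ i j, ρ' i = ρ' j) → w ρ' = 2 * ν ρ' := by
    intro ρ' h; simp only [hw]; exact if_neg h
  have hwnonneg : ∀ ρ', 0 ≤ w ρ' := by
    intro ρ'
    by_cases h : ∀ i j, ρ' i = ρ' j
    · rw [hwconst ρ' h]; linarith [hconst, hνsym]
    · rw [hwnc ρ' h]; linarith [hnonneg ρ']
  have hCstFilter : univ.filter (fun ρ' : Fin n → Bool => ∀ i j, ρ' i = ρ' j)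
      = {fun _ => false, fun _ => true} := by
    ext ρ'
    simp only [Finset.mem_filter, Finset.mem_univ, true_and, Finset.mem_insert,
      Finset.mem_singleton]
    constructor
    · intro h
      cases hb : ρ' i0
      · left; funext i; rw [h i i0, hb]
      · right; funext i; rw [h i i0, hb]
    · rintro (rfl | rfl) <;> exact fun i j => rfl
  have hcfct : (fun _ => false : Fin n → Bool) ≠ (fun _ => true) := by
    intro h; exact absurd (congrFun h i0) (by simp)
  have hsumnc : ∑ ρ' ∈ univ.filter
        (fun ρ' : Fin n → Bool => ¬ ∀ i j, ρ' i = ρ' j), ν ρ'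
      = 1 - ν (fun _ => false) - ν (fun _ => true) := by
    have := Finset.sum_filter_add_sum_filter_not univ
      (fun ρ' : Fin n → Bool => ∀ i j, ρ' i = ρ' j) ν
    rw [hCstFilter, Finset.sum_pair hcfct] at this
    linarith [this, hsum]
  refine ⟨fun σ => ∑ ρ' ∈ univ.filter (fun ρ' => fpart n ρ' = σ), w ρ', ?_, ?_, ?_⟩
  · intro σ
    exact Finset.sum_nonneg fun ρ' _ => hwnonneg ρ'
  · rw [Finset.sum_fiberwise univ (fpart n) w]
    rw [← Finset.sum_filter_add_sum_filter_not univ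
      (fun ρ' : Fin n → Bool => ∀ i j, ρ' i = ρ' j) w]
    rw [hCstFilter, Finset.sum_pair hcfct,
      hwconst (fun _ => false) (fun i j => rfl), hwconst (fun _ => true) (fun i j => rfl)]
    rw [Finset.sum_congr rfl (fun ρ' hρ' => hwnc ρ' (Finset.mem_filter.mp hρ').2),
      ← Finset.mul_sum, hsumnc]
    linarith [hνsym]
  · funext ρ
    have hmap : colorMap n (1/2)
        (fun σ => ∑ ρ' ∈ univ.filter (fun ρ' => fpart n ρ' = σ), w ρ') ρ
        = ∑ σ, colorMatrix n (1/2) ρ σ *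
            ∑ ρ' ∈ univ.filter (fun ρ' => fpart n ρ' = σ), w ρ' := by
      simp [colorMap, Matrix.mulVecLin_apply, Matrix.mulVec, dotProduct]
    have key : ∑ σ, colorMatrix n (1/2) ρ σ *
          ∑ ρ' ∈ univ.filter (fun ρ' => fpart n ρ' = σ), w ρ'
        = ∑ ρ', colorMatrix n (1/2) ρ (fpart n ρ') * w ρ' := by
      rw [← Finset.sum_fiberwise univ (fpart n)
        (fun ρ' => colorMatrix n (1/2) ρ (fpart n ρ') * w ρ')]
      refine Finset.sum_congr rfl fun σ _ => ?_
      rw [Finset.mul_sum]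
      refine Finset.sum_congr rfl fun ρ' hρ' => ?_
      rw [(Finset.mem_filter.mp hρ').2]
    rw [hmap, key]
    by_cases hc : ∀ i j, ρ i = ρ j
    · -- ρ constant
      have hterm : ∀ ρ' : Fin n → Bool, colorMatrix n (1/2) ρ (fpart n ρ') =
          (1/2 : ℝ) ^ (fpart n ρ').parts.card := fun ρ' => by
        rw [colorMatrix_half, if_pos ((cond_fpart ρ ρ').mpr (fun i j _ => hc i j))]
      rw [← Finset.sum_filter_add_sum_filter_not univ
        (fun ρ' : Fin n → Bool => ∀ i j, ρ' i = ρ' j)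
        (fun ρ' => colorMatrix n (1/2) ρ (fpart n ρ') * w ρ')]
      have h1 : ∑ ρ' ∈ univ.filter (fun ρ' : Fin n → Bool => ∀ i j, ρ' i = ρ' j),
          colorMatrix n (1/2) ρ (fpart n ρ') * w ρ'
          = 2 * ν (fun _ => false) - 1/2 := by
        rw [hCstFilter, Finset.sum_pair hcfct, hterm, hterm,
          card_fpart_const (ρ' := fun _ => false) hn (fun i j => rfl),
          card_fpart_const (ρ' := fun _ => true) hn (fun i j => rfl),
          hwconst (fun _ => false) (fun i j => rfl), hwconst (fun _ => true) (fun i j => rfl)]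
        ring
      have h2 : ∑ ρ' ∈ univ.filter (fun ρ' : Fin n → Bool => ¬ ∀ i j, ρ' i = ρ' j),
          colorMatrix n (1/2) ρ (fpart n ρ') * w ρ'
          = (1/2) * (1 - ν (fun _ => false) - ν (fun _ => true)) := by
        have h2' : ∀ ρ' ∈ univ.filter (fun ρ' : Fin n → Bool => ¬ ∀ i j, ρ' i = ρ' j),
            colorMatrix n (1/2) ρ (fpart n ρ') * w ρ' = (1/2 : ℝ) * ν ρ' := by
          intro ρ' hρ'
          have hnc := (Finset.mem_filter.mp hρ').2
          rw [hterm, card_fpart_nonconst hnc, hwnc ρ' hnc]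
          ring
        rw [Finset.sum_congr rfl h2', ← Finset.mul_sum, hsumnc]
      rw [h1, h2]
      have hρcf : ν ρ = ν (fun _ => false) := by
        cases hb : ρ i0
        · rw [show ρ = (fun _ => false) from funext fun i => by rw [hc i i0, hb]]
        · rw [show ρ = (fun _ => true) from funext fun i => by rw [hc i i0, hb], hνsym]
      linarith [hνsym, hρcf]
    · -- ρ nonconstant
      have hne : ρ ≠ (fun i => !(ρ i)) := by
        intro h
        have := congrFun h i0
        simp at this
      have hzero : ∀ ρ' ∈ (univ : Finset (Fin n → Bool)),
          ρ' ∉ ({ρ, fun i => !(ρ i)} : Finset (Fin n → Bool)) →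
          colorMatrix n (1/2) ρ (fpart n ρ') * w ρ' = 0 := by
        intro ρ' _ hmem
        rw [colorMatrix_half, if_neg, zero_mul]
        intro hcond
        have h2 := (cond_fpart ρ ρ').mp hcond
        by_cases hc' : ∀ i j, ρ' i = ρ' j
        · exact hc (fun i j => h2 i j (hc' i j))
        · obtain ⟨⟨a, ha⟩, ⟨b, hb⟩⟩ := exists_tf hc'
          have hρab : ρ a ≠ ρ b := by
            intro he
            apply hc
            have h1 : ∀ i, ρ i = ρ a := by
              intro i
              cases hi : ρ' i
              · rw [h2 i b (by rw [hi, hb]), ← he]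
              · exact h2 i a (by rw [hi, ha])
            intro i j; rw [h1 i, h1 j]
          apply hmem
          simp only [Finset.mem_insert, Finset.mem_singleton]
          cases hpa : ρ a
          · right
            have hpb : ρ b = true := by
              cases hpb : ρ b
              · exact absurd (hpa.trans hpb.symm) hρab
              · rfl
            funext i
            cases hi : ρ' i
            · have h3 : ρ i = true := (h2 i b (by rw [hi, hb])).trans hpb
              rw [h3]; rfl
            · have h3 : ρ i = false := (h2 i a (by rw [hi, ha])).trans hpa
              rw [h3]; rfl
          · left
            have hpb : ρ b = false := by
              cases hpb : ρ b
              · rfl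
              · exact absurd (hpa.trans hpb.symm) hρab
            funext i
            cases hi : ρ' i
            · exact ((h2 i b (by rw [hi, hb])).trans hpb).symm
            · exact ((h2 i a (by rw [hi, ha])).trans hpa).symm
      rw [← Finset.sum_subset
        (Finset.subset_univ ({ρ, fun i => !(ρ i)} : Finset (Fin n → Bool))) hzero,
        Finset.sum_pair hne]
      have hncρ' : ¬ ∀ i j, (!(ρ i)) = (!(ρ j)) := by
        intro h
        exact hc fun i j => Bool.not_inj (h i j)
      rw [colorMatrix_half, if_pos ((cond_fpart ρ ρ).mpr (fun i j h => h)),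
        card_fpart_nonconst hc, hwnc ρ hc,
        colorMatrix_half, if_pos ((cond_fpart ρ (fun i => !(ρ i))).mpr
          (fun i j h => Bool.not_inj h)),
        card_fpart_nonconst hncρ', hwnc (fun i => !(ρ i)) hncρ', ← hsym ρ]
      ring
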